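/- arXiv:2004.02694 — 6 statements merged into one kernel-verified Lean document; each statement's English description precedes it below -/
import Mathlib

section
/- Let G be a finite group and H a subgroup of G with λ_G(H) ≠ 0. Then H belongs to MaxInt(G), i.e. H is either equal to G or is an intersection of maximal subgroups of G. -/
open Classical in
/-- The Möbius function of a finite partial order with a top element:
`mob ⊤ = 1` and `mob x = -∑_{x < y ≤ ⊤} mob y` for `x ≠ ⊤`. -/
noncomputable def mob {α : Type*} [PartialOrder α] [OrderTop α] [Finite α] (x : α) : ℤ :=
  if x = ⊤ then 1
  else - ∑ y ∈ (Set.toFinite {y : α | x < y}).toFinset.attach, mob y.1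
termination_by (Set.toFinite {y : α | x < y}).toFinset.card
decreasing_by
  have hy : x < y.1 := by
    have h2 := y.2
    rwa [Set.Finite.mem_toFinset] at h2
  refine Finset.card_lt_card ?_
  rw [Finset.ssubset_iff_of_subset]
  · exact ⟨y.1, by rwa [Set.Finite.mem_toFinset], by simp [Set.Finite.mem_toFinset]⟩
  · intro z hz
    rw [Set.Finite.mem_toFinset] at hz ⊢
    exact hy.trans hz

section C

variable (G : Type*) [Group G]

instance subgroupFinite [Finite G] : Finite (Subgroup G) :=
  Finite.of_injective (fun H => (H : Set G)) SetLike.coe_injective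

/-- Type synonym for `Subgroup G`, endowed with the preorder `H ≼ K` iff
`H ≤ gKg⁻¹` for some `g : G`. -/
def CSub := Subgroup G

variable {G}

/-- Conversion from `Subgroup G` to the type synonym `CSub G`. -/
def CSub.mk (H : Subgroup G) : CSub G := H

/-- Conversion from the type synonym `CSub G` to `Subgroup G`. -/
def CSub.toSubgroup (H : CSub G) : Subgroup G := H

variable (G)

instance : Preorder (CSub G) where
  le H K := ∃ g : G, H.toSubgroup ≤ K.toSubgroup.map (MulAut.conj g).toMonoidHom
  le_refl H := ⟨1, by
    simp only [map_one]
    rw [show MulEquiv.toMonoidHom (1 : MulAut G) = MonoidHom.id G from rfl, Subgroup.map_id]⟩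
  le_trans H K L := by
    rintro ⟨g, hg⟩ ⟨h, hh⟩
    refine ⟨g * h, hg.trans ?_⟩
    have hm := Subgroup.map_mono (f := (MulAut.conj g).toMonoidHom) hh
    rw [Subgroup.map_map] at hm
    refine hm.trans (le_of_eq ?_)
    congr 1
    ext x
    simp [mul_assoc]

instance [Finite G] : Finite (CSub G) := subgroupFinite G

/-- The poset of conjugacy classes of subgroups of `G`: for a finite group this is
the quotient of subgroups by conjugacy, with `[H] ≤ [K]` iff `H ≤ gKg⁻¹` for some `g ∈ G`. -/
abbrev ConjClassSub := Antisymmetrization (CSub G) (· ≤ ·)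

/-- The conjugacy class of a subgroup, as an element of `ConjClassSub G`. -/
def conjClassOf (H : Subgroup G) : ConjClassSub G :=
  toAntisymmetrization (α := CSub G) (· ≤ ·) (CSub.mk H)

instance : OrderTop (ConjClassSub G) where
  top := conjClassOf G ⊤
  le_top c := by
    induction c using Quotient.ind with
    | _ H =>
      show toAntisymmetrization (α := CSub G) (· ≤ ·) H ≤
        toAntisymmetrization (α := CSub G) (· ≤ ·) (CSub.mk ⊤)
      rw [toAntisymmetrization_le_toAntisymmetrization_iff]
      refine ⟨1, ?_⟩
      show H.toSubgroup ≤ Subgroup.map (MulAut.conj (1:G)).toMonoidHom (⊤ : Subgroup G)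
      rw [Subgroup.map_top_of_surjective _ (MulAut.conj (1:G)).surjective]
      exact le_top

instance [Finite G] : Finite (ConjClassSub G) := Quotient.finite _

variable {G}

/-- The Möbius function `μ_G` on the subgroup lattice of the finite group `G`. -/
noncomputable def muSub [Finite G] (H : Subgroup G) : ℤ := mob H

/-- The Möbius function `λ_G` on the poset of conjugacy classes of subgroups of the
finite group `G`, evaluated at the class of `H`. -/
noncomputable def lamSub [Finite G] (H : Subgroup G) : ℤ :=
  mob (conjClassOf G H)

/-- `G` satisfies the (μ,λ)-property if `μ_G(H) = [N_{G'}(H) : G' ∩ H] · λ_G(H)`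
for every subgroup `H ≤ G`, where `G' = [G,G]` and `N_{G'}(H) = N_G(H) ∩ G'`. -/
def MuLambdaProperty (G : Type*) [Group G] [Finite G] : Prop :=
  ∀ H : Subgroup G,
    muSub H =
      ((commutator G ⊓ H).relIndex (Subgroup.normalizer (H : Set G) ⊓ commutator G) : ℤ) * lamSub H

/-- `MaxInt G` consists of `G` itself (the subgroup `⊤`) together with all
intersections of nonempty families of maximal subgroups of `G`. -/
def MaxInt (G : Type*) [Group G] : Set (Subgroup G) :=
  {H | H = ⊤ ∨ ∃ S : Set (Subgroup G), S.Nonempty ∧ (∀ M ∈ S, IsCoatom M) ∧ H = sInf S}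

end C

instance {n R : Type*} [DecidableEq n] [Fintype n] [CommRing R] [Finite R] :
    Finite (Matrix.SpecialLinearGroup n R) :=
  Finite.of_injective (fun A => (A : Matrix n n R)) Subtype.coe_injective

open scoped MatrixGroups


section MobAux

variable {α : Type*} [PartialOrder α] [OrderTop α] [Finite α]

lemma mob_top : mob (⊤ : α) = 1 := by
  rw [mob, if_pos rfl]

lemma mob_of_ne {x : α} (hx : x ≠ ⊤) :
    mob x = - ∑ y ∈ (Set.toFinite {y : α | x < y}).toFinset, mob y := by
  rw [mob, if_neg hx, Finset.sum_attach]

open Classical in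
lemma sum_mob_le (x : α) :
    ∑ y ∈ (Set.toFinite {y : α | x ≤ y}).toFinset, mob y
      = if x = ⊤ then 1 else 0 := by
  classical
  have hins : (Set.toFinite {y : α | x ≤ y}).toFinset
      = insert x (Set.toFinite {y : α | x < y}).toFinset := by
    ext y
    simp only [Set.Finite.mem_toFinset, Set.mem_setOf_eq, Finset.mem_insert]
    constructor
    · intro h
      rcases eq_or_lt_of_le h with h | h
      · exact Or.inl h.symm
      · exact Or.inr h
    · rintro (rfl | h)
      · exact le_rfl
      · exact h.le
  rw [hins, Finset.sum_insert (by simp [Set.Finite.mem_toFinset])]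
  by_cases hx : x = ⊤
  · subst hx
    have hempty : (Set.toFinite {y : α | (⊤ : α) < y}).toFinset = ∅ := by
      ext y; simp [Set.Finite.mem_toFinset, not_top_lt]
    rw [if_pos rfl, mob_top, hempty]
    simp
  · rw [if_neg hx, mob_of_ne hx]
    ring

lemma mob_eq_zero_of_ne (c : α → α) (hle : ∀ x, x ≤ c x)
    (hmono : ∀ ⦃x y : α⦄, x ≤ y → c x ≤ c y)
    (htop : ∀ x, c x = ⊤ → x = ⊤) (x : α) (hx : c x ≠ x) : mob x = 0 := by
  classical
  refine IsWellFounded.induction (α := α) (· > ·)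
    (motive := fun x => c x ≠ x → mob x = 0) x ?_ hx
  clear hx x
  intro x IH hx
  have hlt : x < c x := (hle x).lt_of_ne (Ne.symm hx)
  have hxt : x ≠ ⊤ := by
    rintro rfl
    exact absurd le_top hlt.not_ge
  have hct : c x ≠ ⊤ := fun h => hx (h.trans (htop x h).symm)
  rw [mob_of_ne hxt, neg_eq_zero]
  have key : ∀ s : Finset α, (∀ y ∈ s, x < y) →
      ∑ y ∈ s, mob y = ∑ y ∈ s, if c y = y then mob y else 0 := by
    intro s hs
    refine Finset.sum_congr rfl fun y hy => ?_
    by_cases h : c y = y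
    · rw [if_pos h]
    · rw [if_neg h, IH y (hs y hy) h]
  have hfil : (Set.toFinite {y : α | x < y}).toFinset.filter (fun y => c y = y)
      = (Set.toFinite {y : α | c x ≤ y}).toFinset.filter (fun y => c y = y) := by
    ext y
    simp only [Finset.mem_filter, Set.Finite.mem_toFinset, Set.mem_setOf_eq]
    constructor
    · rintro ⟨h, hc⟩
      exact ⟨hc ▸ hmono h.le, hc⟩
    · rintro ⟨h, hc⟩
      exact ⟨hlt.trans_le h, hc⟩
  calc ∑ y ∈ (Set.toFinite {y : α | x < y}).toFinset, mob y
      = ∑ y ∈ (Set.toFinite {y : α | x < y}).toFinset, if c y = y then mob y else 0 :=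
        key _ (fun y hy => by rwa [Set.Finite.mem_toFinset] at hy)
    _ = ∑ y ∈ (Set.toFinite {y : α | x < y}).toFinset.filter (fun y => c y = y), mob y :=
        (Finset.sum_filter _ _).symm
    _ = ∑ y ∈ (Set.toFinite {y : α | c x ≤ y}).toFinset.filter (fun y => c y = y), mob y := by
        rw [hfil]
    _ = ∑ y ∈ (Set.toFinite {y : α | c x ≤ y}).toFinset, if c y = y then mob y else 0 :=
        Finset.sum_filter _ _
    _ = ∑ y ∈ (Set.toFinite {y : α | c x ≤ y}).toFinset, mob y :=
        (key _ (fun y hy => by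
          rw [Set.Finite.mem_toFinset] at hy
          exact hlt.trans_le hy)).symm
    _ = 0 := by rw [sum_mob_le, if_neg hct]

end MobAux

section GroupAux

variable {G : Type*} [Group G]

/-- The intersection of all maximal subgroups containing `H`. -/
def Jsub (H : Subgroup G) : Subgroup G := sInf {M | IsCoatom M ∧ H ≤ M}

lemma le_Jsub (H : Subgroup G) : H ≤ Jsub H := le_sInf fun _ hM => hM.2

lemma Jsub_mono {H K : Subgroup G} (h : H ≤ K) : Jsub H ≤ Jsub K :=
  sInf_le_sInf fun _ hM => ⟨hM.1, h.trans hM.2⟩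

lemma Jsub_map (e : G ≃* G) (H : Subgroup G) :
    Jsub (H.map e.toMonoidHom) = (Jsub H).map e.toMonoidHom := by
  have hset : (MulEquiv.mapSubgroup e) '' {M : Subgroup G | IsCoatom M ∧ H ≤ M}
      = {M : Subgroup G | IsCoatom M ∧ H.map e.toMonoidHom ≤ M} := by
    ext M
    simp only [Set.mem_image, Set.mem_setOf_eq]
    constructor
    · rintro ⟨K, ⟨hK, hHK⟩, rfl⟩
      exact ⟨((MulEquiv.mapSubgroup e).isCoatom_iff K).mpr hK,
        (MulEquiv.mapSubgroup e).le_iff_le.mpr hHK⟩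
    · rintro ⟨hM, hHM⟩
      refine ⟨(MulEquiv.mapSubgroup e).symm M, ⟨?_, ?_⟩,
        (MulEquiv.mapSubgroup e).apply_symm_apply M⟩
      · rw [← (MulEquiv.mapSubgroup e).isCoatom_iff, (MulEquiv.mapSubgroup e).apply_symm_apply]
        exact hM
      · rw [← (MulEquiv.mapSubgroup e).le_iff_le, (MulEquiv.mapSubgroup e).apply_symm_apply]
        exact hHM
  have hs := OrderIso.map_sInf (MulEquiv.mapSubgroup e) {M : Subgroup G | IsCoatom M ∧ H ≤ M}
  rw [← sInf_image, hset] at hs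
  exact hs.symm

lemma csub_le_of_le {H K : Subgroup G} (h : H ≤ K) : CSub.mk H ≤ CSub.mk K := by
  refine ⟨1, ?_⟩
  show H ≤ K.map (MulAut.conj (1 : G)).toMonoidHom
  simp only [map_one]
  rw [show MulEquiv.toMonoidHom (1 : MulAut G) = MonoidHom.id G from rfl, Subgroup.map_id]
  exact h

lemma csub_mono {a b : CSub G} (h : a ≤ b) :
    CSub.mk (Jsub a.toSubgroup) ≤ CSub.mk (Jsub b.toSubgroup) := by
  obtain ⟨g, hg⟩ := h
  refine ⟨g, ?_⟩
  show Jsub a.toSubgroup ≤ (Jsub b.toSubgroup).map (MulAut.conj g).toMonoidHom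
  calc Jsub a.toSubgroup
      ≤ Jsub (b.toSubgroup.map (MulAut.conj g).toMonoidHom) := Jsub_mono hg
    _ = (Jsub b.toSubgroup).map (MulAut.conj g).toMonoidHom := Jsub_map (MulAut.conj g) _

/-- The closure operator `[H] ↦ [Jsub H]` on conjugacy classes of subgroups. -/
def cClass (G : Type*) [Group G] : ConjClassSub G → ConjClassSub G :=
  Quotient.map (fun H : CSub G => CSub.mk (Jsub H.toSubgroup))
    (fun _ _ hab => ⟨csub_mono hab.1, csub_mono hab.2⟩)

lemma class_eq_top_iff (K : Subgroup G) :
    toAntisymmetrization (α := CSub G) (· ≤ ·) (CSub.mk K) = (⊤ : ConjClassSub G) ↔ K = ⊤ := by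
  constructor
  · intro h
    have h2 : AntisymmRel (α := CSub G) (· ≤ ·) (CSub.mk K) (CSub.mk ⊤) := Quotient.exact h
    obtain ⟨g, hg⟩ := h2.2
    have htop : K.map (MulAut.conj g).toMonoidHom = ⊤ := top_le_iff.mp hg
    have h3 := congrArg (Subgroup.comap (MulAut.conj g).toMonoidHom) htop
    rwa [Subgroup.comap_map_eq_self_of_injective (MulAut.conj g).injective,
      Subgroup.comap_top] at h3
  · rintro rfl
    rfl

lemma cClass_le (x : ConjClassSub G) : x ≤ cClass G x := by
  obtain ⟨H⟩ := x
  show toAntisymmetrization (α := CSub G) (· ≤ ·) H ≤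
    toAntisymmetrization (α := CSub G) (· ≤ ·) (CSub.mk (Jsub H.toSubgroup))
  rw [toAntisymmetrization_le_toAntisymmetrization_iff]
  exact csub_le_of_le (le_Jsub _)

lemma cClass_mono : ∀ ⦃x y : ConjClassSub G⦄, x ≤ y → cClass G x ≤ cClass G y := by
  intro x y
  obtain ⟨H⟩ := x
  obtain ⟨K⟩ := y
  intro h
  show toAntisymmetrization (α := CSub G) (· ≤ ·) (CSub.mk (Jsub H.toSubgroup)) ≤
    toAntisymmetrization (α := CSub G) (· ≤ ·) (CSub.mk (Jsub K.toSubgroup))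
  rw [toAntisymmetrization_le_toAntisymmetrization_iff]
  exact csub_mono ((toAntisymmetrization_le_toAntisymmetrization_iff (a := H) (b := K)).mp h)

lemma cClass_top [Finite G] : ∀ x : ConjClassSub G, cClass G x = ⊤ → x = ⊤ := by
  intro x
  obtain ⟨H⟩ := x
  intro h
  have hJ : Jsub H.toSubgroup = ⊤ := (class_eq_top_iff _).mp h
  have hH : H.toSubgroup = ⊤ := by
    by_contra hne
    obtain ⟨M, hM, hHM⟩ := (eq_top_or_exists_le_coatom H.toSubgroup).resolve_left hne
    have : Jsub H.toSubgroup ≤ M := sInf_le ⟨hM, hHM⟩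
    rw [hJ] at this
    exact hM.1 (top_le_iff.mp this)
  exact (class_eq_top_iff H.toSubgroup).mpr hH

lemma Jsub_eq_of_closed [Finite G] {H : Subgroup G}
    (h : cClass G (conjClassOf G H) = conjClassOf G H) : Jsub H = H := by
  have h2 : AntisymmRel (α := CSub G) (· ≤ ·) (CSub.mk (Jsub H)) (CSub.mk H) :=
    Quotient.exact h
  obtain ⟨g, hg⟩ := h2.1
  have hcard : Nat.card (H.map (MulAut.conj g).toMonoidHom) = Nat.card H :=
    (Nat.card_congr (Subgroup.equivMapOfInjective H _ (MulAut.conj g).injective).toEquiv).symm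
  have h3 : Nat.card (Jsub H) ≤ Nat.card H := hcard ▸ Subgroup.card_le_of_le hg
  exact (Subgroup.eq_of_le_of_card_ge (le_Jsub H) h3).symm

end GroupAux

/-- If `λ_G(H) ≠ 0` then `H ∈ MaxInt(G)`. -/
theorem lamSub_ne_zero_mem_maxInt (G : Type*) [Group G] [Finite G] (H : Subgroup G)
    (h : lamSub H ≠ 0) : H ∈ MaxInt G := by
  have hcl : cClass G (conjClassOf G H) = conjClassOf G H := by
    by_contra hne
    exact h (mob_eq_zero_of_ne (cClass G) cClass_le cClass_mono cClass_top _ hne)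
  have hJ : Jsub H = H := Jsub_eq_of_closed hcl
  by_cases ht : H = ⊤
  · exact Or.inl ht
  · refine Or.inr ⟨{M | IsCoatom M ∧ H ≤ M}, ?_, fun M hM => hM.1, hJ.symm⟩
    obtain ⟨M, hM, hHM⟩ := (eq_top_or_exists_le_coatom H).resolve_left ht
    exact ⟨M, hM, hHM⟩
end

section
/- Let G be a finite group and H a subgroup of G such that the Frattini subgroup Φ(G) is not contained in H. Then μ_G(H) = 0 and λ_G(H) = 0. -/
open scoped MatrixGroups


section Aux

open Classical in
lemma mob_spec {α : Type*} [PartialOrder α] [OrderTop α] [Finite α] {x : α} (hx : x ≠ ⊤) :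
    mob x = - ∑ y ∈ (Set.toFinite {y : α | x < y}).toFinset, mob y := by
  rw [mob, if_neg hx, Finset.sum_attach]

open Classical in
lemma mob_eq_zero_of {α : Type*} [PartialOrder α] [OrderTop α] [Finite α]
    (P : α → Prop)
    (hc : ∀ x : α, ¬ P x → ∃ z : α, z ≠ ⊤ ∧ ∀ y : α, (x < y ∧ P y) ↔ z ≤ y) :
    ∀ x : α, ¬ P x → mob x = 0 := by
  refine fun x => (Finite.to_wellFoundedGT (α := α)).wf.induction
    (C := fun x => ¬ P x → mob x = 0) x ?_
  intro x ih hPx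
  obtain ⟨z, hzt, hiff⟩ := hc x hPx
  obtain ⟨hxz, hPz⟩ := (hiff z).mpr le_rfl
  have hx : x ≠ ⊤ := fun h => not_top_lt (h ▸ hxz)
  rw [mob_spec hx, neg_eq_zero]
  rw [← Finset.sum_filter_add_sum_filter_not _ P]
  have h2 : ∑ y ∈ (Set.toFinite {y : α | x < y}).toFinset.filter (fun y => ¬ P y), mob y = 0 := by
    refine Finset.sum_eq_zero fun y hy => ?_
    rw [Finset.mem_filter, Set.Finite.mem_toFinset] at hy
    exact ih y hy.1 hy.2
  have h1 : (Set.toFinite {y : α | x < y}).toFinset.filter P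
      = (Set.toFinite {y : α | z ≤ y}).toFinset := by
    ext y
    simp only [Finset.mem_filter, Set.Finite.mem_toFinset, Set.mem_setOf_eq]
    exact hiff y
  have hins : (Set.toFinite {y : α | z ≤ y}).toFinset
      = insert z (Set.toFinite {y : α | z < y}).toFinset := by
    ext y
    simp only [Set.Finite.mem_toFinset, Set.mem_setOf_eq, Finset.mem_insert,
      Set.Finite.mem_toFinset, Set.mem_setOf_eq]
    rw [le_iff_lt_or_eq]
    constructor
    · rintro (h | h); exacts [Or.inr h, Or.inl h.symm]
    · rintro (h | h); exacts [Or.inr h.symm, Or.inl h]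
  rw [h1, h2, hins, Finset.sum_insert (by simp [Set.Finite.mem_toFinset]), mob_spec hzt]
  ring

lemma frattini_sup_ne_top {G : Type*} [Group G] [Finite G] {H : Subgroup G} (h : H ≠ ⊤) :
    H ⊔ frattini G ≠ ⊤ :=
  fun htop => h (frattini_nongenerating htop)

lemma map_conj_normal {G : Type*} [Group G] (N : Subgroup G) [hN : N.Normal] (g : G) :
    Subgroup.map (MulAut.conj g).toMonoidHom N = N := by
  ext x
  simp only [Subgroup.mem_map, MulEquiv.coe_toMonoidHom, MulAut.conj_apply]
  constructor
  · rintro ⟨y, hy, rfl⟩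
    exact hN.conj_mem y hy g
  · intro hx
    exact ⟨g⁻¹ * x * g, by simpa using hN.conj_mem x hx g⁻¹, by group⟩

lemma le_map_conj_iff {G : Type*} [Group G] (N L : Subgroup G) [N.Normal] (g : G) :
    N ≤ Subgroup.map (MulAut.conj g).toMonoidHom L ↔ N ≤ L := by
  conv_lhs => rw [← map_conj_normal N g]
  exact Subgroup.map_le_map_iff_of_injective (MulAut.conj g).injective

lemma conjClassOf_le_iff {G : Type*} [Group G] {H K : Subgroup G} :
    conjClassOf G H ≤ conjClassOf G K ↔
      ∃ g : G, H ≤ Subgroup.map (MulAut.conj g).toMonoidHom K :=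
  toAntisymmetrization_le_toAntisymmetrization_iff

lemma conjClassOf_frattini_le_iff {G : Type*} [Group G] {K : Subgroup G} :
    conjClassOf G (frattini G) ≤ conjClassOf G K ↔ frattini G ≤ K := by
  rw [conjClassOf_le_iff]
  constructor
  · rintro ⟨g, hg⟩
    exact (le_map_conj_iff _ _ g).mp hg
  · intro hK
    exact ⟨1, (le_map_conj_iff _ _ 1).mpr hK⟩

end Aux

/-- If the Frattini subgroup of `G` is not contained in `H`, then `μ_G(H) = 0` and
`λ_G(H) = 0`. -/
theorem mu_lam_eq_zero_of_not_frattini_le (G : Type*) [Group G] [Finite G] (H : Subgroup G)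
    (h : ¬ frattini G ≤ H) : muSub H = 0 ∧ lamSub H = 0 := by
  have key : ∀ x : ConjClassSub G, ¬ conjClassOf G (frattini G) ≤ x →
      ∃ z : ConjClassSub G, z ≠ ⊤ ∧
        ∀ y : ConjClassSub G, (x < y ∧ conjClassOf G (frattini G) ≤ y) ↔ z ≤ y := by
    intro x hPx
    set K : Subgroup G := ofAntisymmetrization (α := CSub G) (· ≤ ·) x with hK
    have hxK : conjClassOf G K = x := toAntisymmetrization_ofAntisymmetrization _ x
    have hKne : ¬ frattini G ≤ K := by
      intro hle
      exact hPx (hxK ▸ conjClassOf_frattini_le_iff.mpr hle)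
    have hKtop : K ≠ ⊤ := fun h => hKne (h ▸ le_top)
    refine ⟨conjClassOf G (K ⊔ frattini G), ?_, ?_⟩
    · intro htop
      have h1 : conjClassOf G (⊤ : Subgroup G) ≤ conjClassOf G (K ⊔ frattini G) :=
        le_of_eq htop.symm
      rw [conjClassOf_le_iff] at h1
      obtain ⟨g, hg⟩ := h1
      have : K ⊔ frattini G = ⊤ := by
        have h2 : Subgroup.map (MulAut.conj g).toMonoidHom (K ⊔ frattini G) = ⊤ :=
          top_le_iff.mp hg
        have h3 : Subgroup.map (MulAut.conj g).toMonoidHom (⊤ : Subgroup G) = ⊤ :=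
          Subgroup.map_top_of_surjective _ (MulAut.conj g).surjective
        exact Subgroup.map_injective (MulAut.conj g).injective (h2.trans h3.symm)
      exact frattini_sup_ne_top hKtop this
    · intro y
      set L : Subgroup G := ofAntisymmetrization (α := CSub G) (· ≤ ·) y with hL
      have hyL : conjClassOf G L = y := toAntisymmetrization_ofAntisymmetrization _ y
      rw [← hyL, ← hxK]
      constructor
      · rintro ⟨hlt, hfr⟩
        obtain ⟨g, hg⟩ := conjClassOf_le_iff.mp hlt.le
        have hfrL : frattini G ≤ L := conjClassOf_frattini_le_iff.mp hfr
        exact conjClassOf_le_iff.mpr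
          ⟨g, sup_le hg ((le_map_conj_iff _ _ g).mpr hfrL)⟩
      · intro hle
        obtain ⟨g, hg⟩ := conjClassOf_le_iff.mp hle
        have hKL : conjClassOf G K ≤ conjClassOf G L :=
          conjClassOf_le_iff.mpr ⟨g, le_trans le_sup_left hg⟩
        have hfrL : conjClassOf G (frattini G) ≤ conjClassOf G L :=
          conjClassOf_frattini_le_iff.mpr
            ((le_map_conj_iff _ _ g).mp (le_trans le_sup_right hg))
        refine ⟨lt_of_le_of_ne hKL ?_, hfrL⟩
        intro heq
        exact hPx (hxK ▸ (heq ▸ hfrL))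
  constructor
  · show mob H = 0
    refine mob_eq_zero_of (fun K : Subgroup G => frattini G ≤ K) ?_ H h
    intro K hKne
    have hKtop : K ≠ ⊤ := fun hh => hKne (hh ▸ le_top)
    refine ⟨K ⊔ frattini G, frattini_sup_ne_top hKtop, fun y => ?_⟩
    constructor
    · rintro ⟨hlt, hfr⟩
      exact sup_le hlt.le hfr
    · intro hle
      have hKy : K ≤ y := le_trans le_sup_left hle
      have hfy : frattini G ≤ y := le_trans le_sup_right hle
      refine ⟨lt_of_le_of_ne hKy ?_, hfy⟩
      rintro rfl
      exact hKne hfy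
  · show mob (conjClassOf G H) = 0
    refine mob_eq_zero_of (fun c : ConjClassSub G => conjClassOf G (frattini G) ≤ c)
      key (conjClassOf G H) ?_
    intro hle
    exact h (conjClassOf_frattini_le_iff.mp hle)
end

section
/- Let n ≥ 2 and let G = G_1 × ⋯ × G_n be a direct product of finite groups such that every maximal subgroup M of G splits as a direct product M = M_1 × ⋯ × M_n with M_i ≤ G_i for every i. Then for every subgroup H = H_1 × ⋯ × H_n of G with H_i ≤ G_i for all i, one has μ_G(H) = ∏_{i=1}^n μ_{G_i}(H_i). -/
open scoped MatrixGroups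


open Classical in
lemma mob_sum_le {α : Type*} [PartialOrder α] [OrderTop α] [Finite α] (x : α) :
    ∑ y ∈ (Set.toFinite {y : α | x ≤ y}).toFinset, mob y = if x = ⊤ then 1 else 0 := by
  classical
  by_cases hx : x = ⊤
  · subst hx
    rw [if_pos rfl]
    have h1 : (Set.toFinite {y : α | ⊤ ≤ y}).toFinset = {⊤} := by
      ext y
      simp [Set.Finite.mem_toFinset, top_le_iff, eq_comm]
    rw [h1, Finset.sum_singleton, mob]
    simp
  · rw [if_neg hx]
    have key : (Set.toFinite {y : α | x ≤ y}).toFinset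
        = insert x (Set.toFinite {y : α | x < y}).toFinset := by
      ext y
      simp only [Set.Finite.mem_toFinset, Set.mem_setOf_eq, Finset.mem_insert]
      rw [le_iff_lt_or_eq]
      tauto
    have hxm : x ∉ (Set.toFinite {y : α | x < y}).toFinset := by
      simp [Set.Finite.mem_toFinset]
    rw [key, Finset.sum_insert hxm]
    have hmx : mob x = - ∑ y ∈ (Set.toFinite {y : α | x < y}).toFinset, mob y := by
      rw [mob, if_neg hx, Finset.sum_attach]
    rw [hmx]
    ring

/-- If every maximal subgroup of `G = ∏ Gᵢ` splits as a direct product, then the Möbius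
function `μ` of a product subgroup is the product of the Möbius functions. -/
theorem muSub_pi (n : ℕ) (hn : 2 ≤ n) (G : Fin n → Type*) [∀ i, Group (G i)] [∀ i, Finite (G i)]
    (hmax : ∀ M : Subgroup (∀ i, G i), IsCoatom M →
      ∃ M' : ∀ i, Subgroup (G i), M = Subgroup.pi Set.univ M')
    (H : ∀ i, Subgroup (G i)) :
    muSub (Subgroup.pi Set.univ H) = ∏ i, muSub (H i) := by
  classical
  set GG := ∀ i, G i with hGG
  let p : ∀ i, Subgroup GG → Subgroup (G i) := fun i K => K.map (Pi.evalMonoidHom G i)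
  let hat : Subgroup GG → Subgroup GG := fun K => Subgroup.pi Set.univ (fun i => p i K)
  have hp_pi : ∀ (H' : ∀ i, Subgroup (G i)) (i : Fin n),
      p i (Subgroup.pi Set.univ H') = H' i := by
    intro H' i
    ext x
    simp only [p, Subgroup.mem_map]
    constructor
    · rintro ⟨f, hf, rfl⟩
      exact (Subgroup.mem_pi _).1 hf i trivial
    · intro hx
      refine ⟨Function.update 1 i x, ?_, ?_⟩
      · rw [Subgroup.mem_pi]
        intro j _
        rcases eq_or_ne j i with rfl | hji
        · simpa using hx
        · simp [Function.update_of_ne hji, Subgroup.one_mem]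
      · simp
  have hp_top : ∀ i : Fin n, p i (⊤ : Subgroup GG) = ⊤ := by
    intro i
    exact Subgroup.map_top_of_surjective _ (Function.surjective_eval i)
  have hle_hat : ∀ K : Subgroup GG, K ≤ hat K := by
    intro K x hx
    rw [Subgroup.mem_pi]
    intro i _
    exact ⟨x, hx, rfl⟩
  have hat_mono : ∀ {K L : Subgroup GG}, K ≤ L → hat K ≤ hat L := by
    intro K L h x hx
    rw [Subgroup.mem_pi] at hx ⊢
    intro i hi
    exact Subgroup.map_mono h (hx i hi)
  have hat_pi : ∀ H' : ∀ i, Subgroup (G i),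
      hat (Subgroup.pi Set.univ H') = Subgroup.pi Set.univ H' := by
    intro H'
    show Subgroup.pi Set.univ _ = _
    congr 1
    funext i
    exact hp_pi H' i
  have hat_top_iff : ∀ K : Subgroup GG, hat K = ⊤ ↔ ∀ i, p i K = ⊤ := by
    intro K
    constructor
    · intro h i
      have := hp_pi (fun j => p j K) i
      rw [show Subgroup.pi Set.univ (fun j => p j K) = hat K from rfl, h, hp_top i] at this
      exact this.symm
    · intro h
      show Subgroup.pi Set.univ _ = ⊤
      rw [funext h]
      exact Subgroup.pi_top _
  haveI : IsCoatomic (Subgroup GG) :=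
    isCoatomic_of_orderTop_gt_wellFounded (Finite.to_wellFoundedGT).wf
  have hat_eq_top : ∀ K : Subgroup GG, hat K = ⊤ → K = ⊤ := by
    intro K hK
    by_contra hKne
    obtain ⟨M, hM, hKM⟩ := (eq_top_or_exists_le_coatom K).resolve_left hKne
    obtain ⟨M', rfl⟩ := hmax M hM
    have h2 : hat K ≤ hat (Subgroup.pi Set.univ M') := hat_mono hKM
    rw [hK, hat_pi] at h2
    exact hM.1 (top_le_iff.mp h2)
  let f : Subgroup GG → ℤ := fun K => if K = hat K then ∏ i, mob (p i K) else 0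
  have hsum : ∀ K : Subgroup GG,
      ∑ L ∈ (Set.toFinite {L : Subgroup GG | K ≤ L}).toFinset, f L
        = if hat K = ⊤ then 1 else 0 := by
    intro K
    have h1 : ∑ L ∈ (Set.toFinite {L : Subgroup GG | K ≤ L}).toFinset, f L
        = ∑ L ∈ (Set.toFinite {L : Subgroup GG | K ≤ L}).toFinset.filter
            (fun L => L = hat L), ∏ i, mob (p i L) := by
      rw [Finset.sum_filter]
    have h2 : ∑ L ∈ (Set.toFinite {L : Subgroup GG | K ≤ L}).toFinset.filter
            (fun L => L = hat L), ∏ i, mob (p i L)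
        = ∑ g ∈ Fintype.piFinset
            (fun i => (Set.toFinite {Li : Subgroup (G i) | p i K ≤ Li}).toFinset),
            ∏ i, mob (g i) := by
      refine Finset.sum_nbij' (i := fun L => fun i => p i L)
        (j := fun g => Subgroup.pi Set.univ g) ?_ ?_ ?_ ?_ ?_
      · intro L hL
        simp only [Finset.mem_filter, Set.Finite.mem_toFinset, Set.mem_setOf_eq] at hL
        rw [Fintype.mem_piFinset]
        intro i
        rw [Set.Finite.mem_toFinset]
        exact Subgroup.map_mono hL.1
      · intro g hg
        rw [Fintype.mem_piFinset] at hg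
        simp only [Finset.mem_filter, Set.Finite.mem_toFinset, Set.mem_setOf_eq]
        constructor
        · refine le_trans (hle_hat K) ?_
          intro x hx
          rw [Subgroup.mem_pi] at hx ⊢
          intro i hi
          have := hg i
          rw [Set.Finite.mem_toFinset] at this
          exact this (hx i hi)
        · exact (hat_pi g).symm
      · intro L hL
        simp only [Finset.mem_filter] at hL
        exact hL.2.symm
      · intro g hg
        funext i
        exact hp_pi g i
      · intro L hL
        rfl
    rw [h1, h2, ← Finset.prod_univ_sum]
    have h3 : ∀ i : Fin n, ∑ Li ∈ (Set.toFinite {Li : Subgroup (G i) | p i K ≤ Li}).toFinset,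
        mob Li = if p i K = ⊤ then 1 else 0 := fun i => mob_sum_le (p i K)
    rw [Finset.prod_congr rfl (fun i _ => h3 i)]
    by_cases h : hat K = ⊤
    · rw [if_pos h]
      have := (hat_top_iff K).1 h
      simp [this]
    · rw [if_neg h]
      obtain ⟨i, hi⟩ : ∃ i, p i K ≠ ⊤ := by
        by_contra hc
        push_neg at hc
        exact h ((hat_top_iff K).2 hc)
      exact Finset.prod_eq_zero (Finset.mem_univ i) (if_neg hi)
  have main : ∀ K : Subgroup GG, mob K = f K := by
    intro K
    refine (Finite.to_wellFoundedGT).wf.induction (C := fun K : Subgroup GG => mob K = f K) K ?_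
    intro K ih
    by_cases hK : K = ⊤
    · subst hK
      have hf : f ⊤ = 1 := by
        have htop : (⊤ : Subgroup GG) = hat ⊤ := by
          rw [(hat_top_iff ⊤).2 hp_top]
        rw [show f ⊤ = if (⊤ : Subgroup GG) = hat ⊤ then ∏ i, mob (p i ⊤) else 0 from rfl,
          if_pos htop]
        have : ∀ i : Fin n, mob (p i (⊤ : Subgroup GG)) = 1 := by
          intro i
          rw [hp_top i, mob]
          simp
        rw [Finset.prod_congr rfl (fun i _ => this i)]
        simp
      rw [hf, mob]
      simp
    · have hmx : mob K = - ∑ L ∈ (Set.toFinite {L : Subgroup GG | K < L}).toFinset, mob L := by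
        rw [mob, if_neg hK, Finset.sum_attach]
      have hIH : ∑ L ∈ (Set.toFinite {L : Subgroup GG | K < L}).toFinset, mob L
          = ∑ L ∈ (Set.toFinite {L : Subgroup GG | K < L}).toFinset, f L := by
        refine Finset.sum_congr rfl ?_
        intro L hL
        rw [Set.Finite.mem_toFinset] at hL
        exact ih L hL
      have key : (Set.toFinite {L : Subgroup GG | K ≤ L}).toFinset
          = insert K (Set.toFinite {L : Subgroup GG | K < L}).toFinset := by
        ext L
        simp only [Set.Finite.mem_toFinset, Set.mem_setOf_eq, Finset.mem_insert]
        rw [le_iff_lt_or_eq]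
        tauto
      have hxm : K ∉ (Set.toFinite {L : Subgroup GG | K < L}).toFinset := by
        simp [Set.Finite.mem_toFinset]
      have hs := hsum K
      rw [key, Finset.sum_insert hxm] at hs
      have hhat : hat K ≠ ⊤ := fun h => hK (hat_eq_top K h)
      rw [if_neg hhat] at hs
      rw [hmx, hIH]
      linarith
  have hfin : f (Subgroup.pi Set.univ H) = ∏ i, mob (H i) := by
    have hprod : (Subgroup.pi Set.univ H : Subgroup GG) = hat (Subgroup.pi Set.univ H) :=
      (hat_pi H).symm
    rw [show f (Subgroup.pi Set.univ H) = if (Subgroup.pi Set.univ H : Subgroup GG)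
        = hat (Subgroup.pi Set.univ H) then ∏ i, mob (p i (Subgroup.pi Set.univ H)) else 0
      from rfl, if_pos hprod]
    exact Finset.prod_congr rfl (fun i _ => by rw [hp_pi H i])
  show mob (Subgroup.pi Set.univ H) = ∏ i, mob (H i)
  rw [main (Subgroup.pi Set.univ H), hfin]
end

section
/- Let G be a finite group, N a normal subgroup of G, and H a subgroup of G containing N. Then μ_G(H) = μ_{G/N}(H/N), λ_G(H) = λ_{G/N}(H/N), and [N_{G'}(H) : G' ∩ H] = [N_{(G/N)'}(H/N) : (G/N)' ∩ (H/N)], where G' denotes the commutator subgroup. In particular, the identity μ_G(H) = [N_{G'}(H) : G' ∩ H] · λ_G(H) holds if and only if the corresponding identity holds for H/N in G/N. -/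
-- ===================== auxiliary lemmas =====================

theorem mob_orderIso' {α β : Type*} [PartialOrder α] [OrderTop α] [Finite α]
    [PartialOrder β] [OrderTop β] [Finite β] (e : α ≃o β) (x : α) :
    mob (e x) = mob x := by
  by_cases hx : x = ⊤
  · subst hx
    rw [mob, mob, if_pos rfl, if_pos (map_top e)]
  · have hex : e x ≠ ⊤ := by
      intro h
      exact hx (e.injective (by rw [h, map_top]))
    rw [mob, mob, if_neg hx, if_neg hex]
    congr 1
    rw [Finset.sum_attach _ (fun y => mob y), Finset.sum_attach _ (fun y => mob y)]
    refine Finset.sum_nbij' (fun z => e.symm z) (fun y => e y) ?_ ?_ ?_ ?_ ?_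
    · intro z hz
      rw [Set.Finite.mem_toFinset] at hz ⊢
      rw [← e.symm_apply_apply x]
      exact e.symm.strictMono hz
    · intro y hy
      rw [Set.Finite.mem_toFinset] at hy ⊢
      simpa using hy
    · intro z _; simp
    · intro y _; simp
    · intro z hz
      rw [Set.Finite.mem_toFinset] at hz
      have hlt : x < e.symm z := by
        rw [← e.symm_apply_apply x]
        exact e.symm.strictMono hz
      have h2 := mob_orderIso' e (e.symm z)
      rw [e.apply_symm_apply] at h2
      show mob z = mob (e.symm z)
      exact h2
termination_by (Set.toFinite {y : α | x < y}).toFinset.card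
decreasing_by
  refine Finset.card_lt_card ?_
  rw [Finset.ssubset_iff_of_subset]
  · exact ⟨e.symm z, by rwa [Set.Finite.mem_toFinset], by simp [Set.Finite.mem_toFinset]⟩
  · intro w hw
    rw [Set.Finite.mem_toFinset] at hw ⊢
    exact hlt.trans hw

instance upperOrderTop {α : Type*} [Preorder α] [OrderTop α] (x : α) :
    OrderTop {z : α // x ≤ z} where
  top := ⟨⊤, le_top⟩
  le_top a := by exact le_top (a := a.1)

theorem mob_subtype {α : Type*} [PartialOrder α] [OrderTop α] [Finite α] {x : α} (y : α)
    (hxy : x ≤ y) : mob (⟨y, hxy⟩ : {z : α // x ≤ z}) = mob y := by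
  by_cases hy : y = ⊤
  · subst hy
    rw [mob, mob, if_pos (show (⟨⊤, hxy⟩ : {z : α // x ≤ z}) = ⊤ from Subtype.ext rfl),
      if_pos rfl]
  · have hy' : (⟨y, hxy⟩ : {z : α // x ≤ z}) ≠ ⊤ := by
      intro h
      exact hy (congrArg Subtype.val h)
    rw [mob, mob, if_neg hy', if_neg hy]
    congr 1
    rw [Finset.sum_attach _ (fun y => mob y), Finset.sum_attach _ (fun y => mob y)]
    refine Finset.sum_bij' (fun w _ => w.1)
      (fun z hz => ⟨z, hxy.trans (by rw [Set.Finite.mem_toFinset] at hz; exact hz.le)⟩)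
      ?_ ?_ ?_ ?_ ?_
    · intro w hw
      rw [Set.Finite.mem_toFinset] at hw ⊢
      exact hw
    · intro z hz
      rw [Set.Finite.mem_toFinset] at hz ⊢
      exact hz
    · intro w _; rfl
    · intro z _; rfl
    · intro w hw
      rw [Set.Finite.mem_toFinset] at hw
      have hlt : y < w.1 := hw
      have h2 := mob_subtype w.1 (hxy.trans hlt.le)
      show mob w = mob w.1
      rw [← h2]
termination_by (Set.toFinite {z : α | y < z}).toFinset.card
decreasing_by
  refine Finset.card_lt_card ?_
  rw [Finset.ssubset_iff_of_subset]
  · exact ⟨w.1, by rwa [Set.Finite.mem_toFinset], by simp [Set.Finite.mem_toFinset]⟩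
  · intro v hv
    rw [Set.Finite.mem_toFinset] at hv ⊢
    exact hlt.trans hv

theorem mob_eq_of_upperIso {α β : Type*} [PartialOrder α] [OrderTop α] [Finite α]
    [PartialOrder β] [OrderTop β] [Finite β] {x : α} {y : β}
    (e : {z : α // x ≤ z} ≃o {w : β // y ≤ w}) (he : (e ⟨x, le_rfl⟩).1 = y) :
    mob x = mob y := by
  rw [← mob_subtype x le_rfl, ← mob_subtype y le_rfl, ← mob_orderIso' e ⟨x, le_rfl⟩]
  congr 1
  exact Subtype.ext he

section QuotAux

variable {G : Type*} [Group G] (N : Subgroup G) [N.Normal]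

theorem conj_map_comm (g : G) (K : Subgroup G) :
    (K.map (MulAut.conj g).toMonoidHom).map (QuotientGroup.mk' N) =
      (K.map (QuotientGroup.mk' N)).map
        (MulAut.conj ((QuotientGroup.mk' N) g)).toMonoidHom := by
  rw [Subgroup.map_map, Subgroup.map_map]
  have hcomp : (QuotientGroup.mk' N).comp (MulAut.conj g).toMonoidHom
      = (MulAut.conj ((QuotientGroup.mk' N) g)).toMonoidHom.comp (QuotientGroup.mk' N) := by
    ext x
    simp [MulAut.conj_apply]
  rw [hcomp]

theorem map_inf_of_ker_le {G₂ : Type*} [Group G₂] (f : G →* G₂) {A B : Subgroup G}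
    (h : f.ker ≤ B) : (A ⊓ B).map f = A.map f ⊓ B.map f := by
  refine le_antisymm (le_inf (Subgroup.map_mono inf_le_left)
    (Subgroup.map_mono inf_le_right)) ?_
  rintro x ⟨hxA, hxB⟩
  obtain ⟨a, ha, rfl⟩ := hxA
  obtain ⟨b, hb, hba⟩ := hxB
  have hker : b * a⁻¹ ∈ f.ker := by
    rw [MonoidHom.mem_ker, map_mul, map_inv, hba, mul_inv_cancel]
  have haB : a ∈ B := by
    have h2 := B.mul_mem (B.inv_mem (h hker)) hb
    simpa [mul_assoc] using h2
  exact ⟨a, ⟨ha, haB⟩, rfl⟩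

theorem comap_map_mk' {H : Subgroup G} (hNH : N ≤ H) :
    (H.map (QuotientGroup.mk' N)).comap (QuotientGroup.mk' N) = H := by
  rw [Subgroup.comap_map_eq, QuotientGroup.ker_mk', sup_eq_left.mpr hNH]

/-- The correspondence order isomorphism between subgroups of `G` above `H` and subgroups
of `G ⧸ N` above `H/N`. -/
noncomputable def subgroupUpperIso (H : Subgroup G) (hNH : N ≤ H) :
    {K : Subgroup G // H ≤ K} ≃o
      {K' : Subgroup (G ⧸ N) // H.map (QuotientGroup.mk' N) ≤ K'} := by
  refine Equiv.toOrderIso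
    { toFun := fun K => ⟨K.1.map (QuotientGroup.mk' N), Subgroup.map_mono K.2⟩
      invFun := fun K' => ⟨K'.1.comap (QuotientGroup.mk' N),
        ((comap_map_mk' N hNH).ge).trans (Subgroup.comap_mono K'.2)⟩
      left_inv := fun K => Subtype.ext (comap_map_mk' N (hNH.trans K.2))
      right_inv := fun K' => Subtype.ext
        (Subgroup.map_comap_eq_self_of_surjective (QuotientGroup.mk'_surjective N) K'.1) }
    ?_ ?_
  · intro a b hab
    exact Subgroup.map_mono hab
  · intro a b hab
    exact Subgroup.comap_mono hab

theorem mapC_mono {K L : CSub G} (h : K ≤ L) :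
    CSub.mk (K.toSubgroup.map (QuotientGroup.mk' N)) ≤
      CSub.mk (L.toSubgroup.map (QuotientGroup.mk' N)) := by
  obtain ⟨g, hg⟩ := h
  refine ⟨QuotientGroup.mk' N g, ?_⟩
  show K.toSubgroup.map (QuotientGroup.mk' N) ≤ _
  show _ ≤ (L.toSubgroup.map (QuotientGroup.mk' N)).map
    (MulAut.conj ((QuotientGroup.mk' N) g)).toMonoidHom
  rw [← conj_map_comm]
  exact Subgroup.map_mono hg

theorem comapC_mono {K L : CSub (G ⧸ N)} (h : K ≤ L) :
    CSub.mk (K.toSubgroup.comap (QuotientGroup.mk' N)) ≤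
      CSub.mk (L.toSubgroup.comap (QuotientGroup.mk' N)) := by
  obtain ⟨gb, hg⟩ := h
  obtain ⟨g, rfl⟩ := QuotientGroup.mk'_surjective N gb
  refine ⟨g, ?_⟩
  show K.toSubgroup.comap (QuotientGroup.mk' N) ≤
    (L.toSubgroup.comap (QuotientGroup.mk' N)).map (MulAut.conj g).toMonoidHom
  have key : (L.toSubgroup.map (MulAut.conj ((QuotientGroup.mk' N) g)).toMonoidHom).comap
        (QuotientGroup.mk' N)
      = (L.toSubgroup.comap (QuotientGroup.mk' N)).map (MulAut.conj g).toMonoidHom := by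
    conv_lhs => rw [← Subgroup.map_comap_eq_self_of_surjective
      (QuotientGroup.mk'_surjective N) L.toSubgroup]
    rw [← conj_map_comm, Subgroup.comap_map_eq, QuotientGroup.ker_mk']
    refine sup_eq_left.mpr ?_
    intro n hn
    refine ⟨g⁻¹ * n * g, ?_, ?_⟩
    · show QuotientGroup.mk' N (g⁻¹ * n * g) ∈ L.toSubgroup
      have hmem : g⁻¹ * n * g ∈ N := Subgroup.Normal.conj_mem' inferInstance n hn g
      rw [show QuotientGroup.mk' N (g⁻¹ * n * g) = 1 from (QuotientGroup.eq_one_iff _).mpr hmem]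
      exact Subgroup.one_mem _
    · show (MulAut.conj g).toMonoidHom (g⁻¹ * n * g) = n
      simp [MulAut.conj_apply, mul_assoc]
  rw [← key]
  exact Subgroup.comap_mono hg

/-- The induced map on conjugacy classes of subgroups. -/
def FqC : ConjClassSub G → ConjClassSub (G ⧸ N) :=
  Quotient.map' (fun K => CSub.mk (K.toSubgroup.map (QuotientGroup.mk' N)))
    (fun _ _ h => ⟨mapC_mono N h.1, mapC_mono N h.2⟩)

/-- The induced backward map on conjugacy classes of subgroups. -/
def FbC : ConjClassSub (G ⧸ N) → ConjClassSub G :=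
  Quotient.map' (fun K => CSub.mk (K.toSubgroup.comap (QuotientGroup.mk' N)))
    (fun _ _ h => ⟨comapC_mono N h.1, comapC_mono N h.2⟩)

theorem FqC_mono : Monotone (FqC N) := by
  intro c d
  induction c using Quotient.ind with | _ K =>
  induction d using Quotient.ind with | _ L =>
  intro h
  exact toAntisymmetrization_le_toAntisymmetrization_iff.mpr
    (mapC_mono N (toAntisymmetrization_le_toAntisymmetrization_iff.mp h))

theorem FbC_mono : Monotone (FbC N) := by
  intro c d
  induction c using Quotient.ind with | _ K =>
  induction d using Quotient.ind with | _ L =>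
  intro h
  exact toAntisymmetrization_le_toAntisymmetrization_iff.mpr
    (comapC_mono N (toAntisymmetrization_le_toAntisymmetrization_iff.mp h))

theorem FqC_conjClassOf (K : Subgroup G) :
    FqC N (conjClassOf G K) = conjClassOf (G ⧸ N) (K.map (QuotientGroup.mk' N)) := rfl

theorem FbC_conjClassOf (K : Subgroup (G ⧸ N)) :
    FbC N (conjClassOf (G ⧸ N) K) = conjClassOf G (K.comap (QuotientGroup.mk' N)) := rfl

theorem le_of_classLe {H : Subgroup G} {K : CSub G} (hNH : N ≤ H)
    (hc : conjClassOf G H ≤ toAntisymmetrization (α := CSub G) (· ≤ ·) K) :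
    N ≤ K.toSubgroup := by
  obtain ⟨g, hg⟩ := toAntisymmetrization_le_toAntisymmetrization_iff.mp hc
  intro m hm
  have hn : g * m * g⁻¹ ∈ N := Subgroup.Normal.conj_mem inferInstance m hm g
  obtain ⟨k, hk, hk2⟩ := hg (hNH hn)
  have hk2' : g * k * g⁻¹ = g * m * g⁻¹ := hk2
  have hk3 : k = m := mul_left_cancel (mul_right_cancel hk2')
  rwa [← hk3]

theorem FbC_FqC {H : Subgroup G} (hNH : N ≤ H) (c : ConjClassSub G)
    (hc : conjClassOf G H ≤ c) : FbC N (FqC N c) = c := by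
  induction c using Quotient.ind with | _ K =>
  have hNK : N ≤ K.toSubgroup := le_of_classLe N hNH hc
  show conjClassOf G ((K.toSubgroup.map (QuotientGroup.mk' N)).comap (QuotientGroup.mk' N))
    = toAntisymmetrization (α := CSub G) (· ≤ ·) K
  rw [comap_map_mk' N hNK]
  rfl

theorem FqC_FbC (c' : ConjClassSub (G ⧸ N)) : FqC N (FbC N c') = c' := by
  induction c' using Quotient.ind with | _ K =>
  show conjClassOf (G ⧸ N)
      ((K.toSubgroup.comap (QuotientGroup.mk' N)).map (QuotientGroup.mk' N))
    = toAntisymmetrization (α := CSub (G ⧸ N)) (· ≤ ·) K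
  rw [Subgroup.map_comap_eq_self_of_surjective (QuotientGroup.mk'_surjective N)]
  rfl

/-- The order isomorphism between upper sets of conjugacy classes. -/
noncomputable def conjUpperIso (H : Subgroup G) (hNH : N ≤ H) :
    {c : ConjClassSub G // conjClassOf G H ≤ c} ≃o
      {c' : ConjClassSub (G ⧸ N) //
        conjClassOf (G ⧸ N) (H.map (QuotientGroup.mk' N)) ≤ c'} := by
  refine Equiv.toOrderIso
    { toFun := fun c => ⟨FqC N c.1, by
        have h := FqC_mono N c.2
        rwa [FqC_conjClassOf] at h⟩
      invFun := fun c' => ⟨FbC N c'.1, by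
        have h := FbC_mono N c'.2
        rwa [FbC_conjClassOf, comap_map_mk' N hNH] at h⟩
      left_inv := fun c => Subtype.ext (FbC_FqC N hNH c.1 c.2)
      right_inv := fun c' => Subtype.ext (FqC_FbC N c'.1) }
    ?_ ?_
  · intro a b hab
    exact FqC_mono N hab
  · intro a b hab
    exact FbC_mono N hab

end QuotAux

open scoped MatrixGroups
open scoped Pointwise

/-- For a normal subgroup `N ≤ H` of a finite group `G`: `μ_G(H) = μ_{G/N}(H/N)`,
`λ_G(H) = λ_{G/N}(H/N)`, the indices `[N_{G'}(H) : G' ∩ H]` and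
`[N_{(G/N)'}(H/N) : (G/N)' ∩ H/N]` agree, and hence the (μ,λ)-identity holds for `H` in `G`
iff it holds for `H/N` in `G/N`. -/
theorem mu_lam_quotient (G : Type*) [Group G] [Finite G] (N : Subgroup G) [N.Normal]
    (H : Subgroup G) (hNH : N ≤ H) :
    muSub H = muSub (H.map (QuotientGroup.mk' N)) ∧
    lamSub H = lamSub (H.map (QuotientGroup.mk' N)) ∧
    (commutator G ⊓ H).relIndex (Subgroup.normalizer (H : Set G) ⊓ commutator G) =
      (commutator (G ⧸ N) ⊓ (H.map (QuotientGroup.mk' N))).relIndex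
        (Subgroup.normalizer ((H.map (QuotientGroup.mk' N) : Subgroup (G ⧸ N)) : Set (G ⧸ N)) ⊓ commutator (G ⧸ N)) ∧
    (muSub H = ((commutator G ⊓ H).relIndex (Subgroup.normalizer (H : Set G) ⊓ commutator G) : ℤ) * lamSub H ↔
      muSub (H.map (QuotientGroup.mk' N)) =
        ((commutator (G ⧸ N) ⊓ (H.map (QuotientGroup.mk' N))).relIndex
          (Subgroup.normalizer ((H.map (QuotientGroup.mk' N) : Subgroup (G ⧸ N)) : Set (G ⧸ N)) ⊓ commutator (G ⧸ N)) : ℤ) * lamSub (H.map (QuotientGroup.mk' N))) := by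
  have hmu : muSub H = muSub (H.map (QuotientGroup.mk' N)) := by
    unfold muSub
    exact mob_eq_of_upperIso (subgroupUpperIso N H hNH) rfl
  have hlam : lamSub H = lamSub (H.map (QuotientGroup.mk' N)) := by
    unfold lamSub
    exact mob_eq_of_upperIso (conjUpperIso N H hNH) rfl
  have hker : (QuotientGroup.mk' N).ker = N := QuotientGroup.ker_mk' N
  have hNle : (QuotientGroup.mk' N).ker ≤ H := by rw [hker]; exact hNH
  have hNleNorm : (QuotientGroup.mk' N).ker ≤ Subgroup.normalizer (H : Set G) := hNle.trans Subgroup.le_normalizer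
  have hcomm : commutator (G ⧸ N) = (commutator G).map (QuotientGroup.mk' N) := by
    rw [commutator_def, commutator_def, Subgroup.map_commutator,
      Subgroup.map_top_of_surjective _ (QuotientGroup.mk'_surjective N)]
  have hnorm : Subgroup.normalizer ((H.map (QuotientGroup.mk' N) : Subgroup (G ⧸ N)) : Set (G ⧸ N))
      = (Subgroup.normalizer (H : Set G)).map (QuotientGroup.mk' N) := by
    have h1 := Subgroup.comap_normalizer_eq_of_surjective (H.map (QuotientGroup.mk' N))
      (QuotientGroup.mk'_surjective N)
    rw [comap_map_mk' N hNH] at h1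
    rw [← h1, Subgroup.map_comap_eq_self_of_surjective (QuotientGroup.mk'_surjective N)]
  have hB : commutator (G ⧸ N) ⊓ H.map (QuotientGroup.mk' N)
      = (commutator G ⊓ H).map (QuotientGroup.mk' N) := by
    rw [hcomm, map_inf_of_ker_le (QuotientGroup.mk' N) hNle]
  have hA : Subgroup.normalizer ((H.map (QuotientGroup.mk' N) : Subgroup (G ⧸ N)) : Set (G ⧸ N)) ⊓ commutator (G ⧸ N)
      = (Subgroup.normalizer (H : Set G) ⊓ commutator G).map (QuotientGroup.mk' N) := by
    rw [hcomm, hnorm, inf_comm, ← map_inf_of_ker_le (QuotientGroup.mk' N) hNleNorm, inf_comm]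
  have hinf : ((commutator G ⊓ H) ⊔ N) ⊓ (Subgroup.normalizer (H : Set G) ⊓ commutator G)
      = (commutator G ⊓ H) ⊓ (Subgroup.normalizer (H : Set G) ⊓ commutator G) := by
    refine le_antisymm ?_ (inf_le_inf_right _ le_sup_left)
    intro x hx
    rw [Subgroup.mem_inf] at hx ⊢
    obtain ⟨hx1, hx2⟩ := hx
    have hx' : x ∈ ((commutator G ⊓ H : Subgroup G) : Set G) * (N : Set G) := by
      rw [← Subgroup.mul_normal]
      exact hx1
    obtain ⟨b, hb, n, hn, hbn⟩ := hx'
    refine ⟨Subgroup.mem_inf.mpr ⟨(Subgroup.mem_inf.mp hx2).2, ?_⟩, hx2⟩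
    rw [← hbn]
    exact H.mul_mem (Subgroup.mem_inf.mp hb).2 (hNH hn)
  have hindex : (commutator G ⊓ H).relIndex (Subgroup.normalizer (H : Set G) ⊓ commutator G) =
      (commutator (G ⧸ N) ⊓ (H.map (QuotientGroup.mk' N))).relIndex
        (Subgroup.normalizer ((H.map (QuotientGroup.mk' N) : Subgroup (G ⧸ N)) : Set (G ⧸ N)) ⊓ commutator (G ⧸ N)) := by
    rw [hB, hA, ← Subgroup.relIndex_comap, Subgroup.comap_map_eq, hker,
      ← Subgroup.inf_relIndex_right ((commutator G ⊓ H) ⊔ N),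
      ← Subgroup.inf_relIndex_right (commutator G ⊓ H), hinf]
  refine ⟨hmu, hlam, hindex, ?_⟩
  rw [hmu, hlam, hindex]
end

section
/- Let G be a finite group and N a normal subgroup of G. If the quotient group G/N does not satisfy the (μ,λ)-property, then G does not satisfy the (μ,λ)-property. -/
open scoped MatrixGroups

open Classical in
theorem mob_eq_mob {α β : Type*} [PartialOrder α] [OrderTop α] [Finite α]
    [PartialOrder β] [OrderTop β] [Finite β] (f : α → β) (x : α)
    (hiff : ∀ y z : α, x ≤ y → x ≤ z → (y ≤ z ↔ f y ≤ f z))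
    (hsurj : ∀ w : β, f x ≤ w → ∃ y : α, x ≤ y ∧ f y = w) :
    mob x = mob (f x) := by
  by_cases hx : x = ⊤
  · obtain ⟨y, hy, hfy⟩ := hsurj ⊤ le_top
    have hy' : y = ⊤ := le_antisymm le_top (hx ▸ hy)
    have hfx : f x = ⊤ := by rw [hx, ← hy', hfy]
    rw [mob, if_pos hx, mob, if_pos hfx]
  · have hftop : f ⊤ = ⊤ := by
      obtain ⟨y, hy, hfy⟩ := hsurj ⊤ le_top
      have := (hiff y ⊤ hy le_top).mp le_top
      exact le_antisymm le_top (hfy ▸ this)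
    have hfx : f x ≠ ⊤ := by
      intro hc
      apply hx
      have : (⊤ : α) ≤ x := (hiff ⊤ x le_top le_rfl).mpr (by rw [hftop, hc])
      exact le_antisymm le_top this
    rw [mob, if_neg hx, mob, if_neg hfx]
    congr 1
    rw [Finset.sum_attach ((Set.toFinite {y : α | x < y}).toFinset) (fun y => mob y),
      Finset.sum_attach ((Set.toFinite {w : β | f x < w}).toFinset) (fun w => mob w)]
    refine Finset.sum_bij (fun y _ => f y) ?_ ?_ ?_ ?_
    · intro a ha
      rw [Set.Finite.mem_toFinset] at ha ⊢
      have h1 : f x ≤ f a := (hiff x a le_rfl ha.le).mp ha.le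
      refine lt_of_le_of_ne h1 fun hc => ?_
      have : a ≤ x := (hiff a x ha.le le_rfl).mpr (le_of_eq hc.symm)
      exact absurd (le_antisymm this ha.le) (ne_of_gt ha)
    · intro a ha b hb hab
      rw [Set.Finite.mem_toFinset] at ha hb
      exact le_antisymm ((hiff a b ha.le hb.le).mpr hab.le)
        ((hiff b a hb.le ha.le).mpr hab.ge)
    · intro w hw
      rw [Set.Finite.mem_toFinset] at hw
      obtain ⟨y, hy, hfy⟩ := hsurj w hw.le
      have hxy : x < y := lt_of_le_of_ne hy fun hc => (ne_of_gt hw) (by rw [← hfy, ← hc])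
      exact ⟨y, Set.Finite.mem_toFinset _ |>.mpr hxy, hfy⟩
    · intro a ha
      rw [Set.Finite.mem_toFinset] at ha
      exact mob_eq_mob f a (fun y z hy hz => hiff y z (ha.le.trans hy) (ha.le.trans hz))
        (fun w hw => by
          obtain ⟨y, hy, hfy⟩ := hsurj w (((hiff x a le_rfl ha.le).mp ha.le).trans hw)
          exact ⟨y, ((hiff a y ha.le hy).mpr (hfy ▸ hw)), hfy⟩)
termination_by (Set.toFinite {y : α | x < y}).toFinset.card
decreasing_by
  rw [Set.Finite.mem_toFinset] at ha
  refine Finset.card_lt_card ?_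
  rw [Finset.ssubset_iff_of_subset]
  · exact ⟨a, by rwa [Set.Finite.mem_toFinset], by simp [Set.Finite.mem_toFinset]⟩
  · intro z hz
    rw [Set.Finite.mem_toFinset] at hz ⊢
    exact ha.trans hz

section Transfer

variable {G : Type*} [Group G] {N : Subgroup G} [N.Normal]

lemma conj_map_map (L : Subgroup G) (g : G) :
    (L.map (MulAut.conj g).toMonoidHom).map (QuotientGroup.mk' N) =
      (L.map (QuotientGroup.mk' N)).map
        (MulAut.conj (QuotientGroup.mk' N g)).toMonoidHom := by
  rw [Subgroup.map_map, Subgroup.map_map]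
  have : (QuotientGroup.mk' N).comp (MulAut.conj g).toMonoidHom =
      (MulAut.conj (QuotientGroup.mk' N g)).toMonoidHom.comp (QuotientGroup.mk' N) := by
    ext x
    simp [mul_assoc]
  rw [this]

lemma conj_comap_map (S : Subgroup (G ⧸ N)) (g : G) :
    (S.map (MulAut.conj (QuotientGroup.mk' N g)).toMonoidHom).comap (QuotientGroup.mk' N) =
      (S.comap (QuotientGroup.mk' N)).map (MulAut.conj g).toMonoidHom := by
  ext x
  simp only [Subgroup.mem_comap, Subgroup.mem_map_equiv, MulAut.conj_symm_apply,
    map_mul, map_inv]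

lemma conj_map_self' (M : Subgroup G) [M.Normal] (g : G) : M.map (MulAut.conj g).toMonoidHom = M := by
  ext x
  simp only [Subgroup.mem_map_equiv, MulAut.conj_symm_apply]
  constructor
  · intro hx
    have := Subgroup.Normal.conj_mem ‹M.Normal› _ hx g
    simpa [mul_assoc] using this
  · intro hx
    exact Subgroup.Normal.conj_mem' ‹M.Normal› _ hx g

end Transfer

section Transfer2

variable {G : Type*} [Group G] [Finite G] {N : Subgroup G} [N.Normal]

lemma muSub_transfer {H : Subgroup G} (hNH : N ≤ H) :
    muSub H = muSub (H.map (QuotientGroup.mk' N)) := by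
  refine mob_eq_mob (fun K : Subgroup G => K.map (QuotientGroup.mk' N)) H ?_ ?_
  · intro K L hK hL
    constructor
    · exact Subgroup.map_mono
    · intro hm
      refine le_trans (K.le_comap_map (QuotientGroup.mk' N)) ?_
      refine le_trans (Subgroup.comap_mono hm) ?_
      rw [Subgroup.comap_map_eq_self]
      rw [QuotientGroup.ker_mk']
      exact hNH.trans hL
  · intro W hW
    refine ⟨W.comap (QuotientGroup.mk' N), ?_, ?_⟩
    · exact le_trans (H.le_comap_map (QuotientGroup.mk' N)) (Subgroup.comap_mono hW)
    · exact Subgroup.map_comap_eq_self_of_surjective (QuotientGroup.mk'_surjective N) W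

end Transfer2

section Transfer3

variable {G : Type*} [Group G] {N : Subgroup G} [N.Normal]

lemma conj_conj_inv (K : Subgroup G) (g : G) :
    (K.map (MulAut.conj g).toMonoidHom).map (MulAut.conj g⁻¹).toMonoidHom = K := by
  ext x
  simp [Subgroup.mem_map_equiv, mul_assoc]

lemma csub_mono_s12 {K L : CSub G} (h : K ≤ L) :
    (CSub.mk (K.toSubgroup.map (QuotientGroup.mk' N)) : CSub (G ⧸ N)) ≤
      CSub.mk (L.toSubgroup.map (QuotientGroup.mk' N)) := by
  obtain ⟨g, hg⟩ := h
  refine ⟨QuotientGroup.mk' N g, ?_⟩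
  show Subgroup.map (QuotientGroup.mk' N) K.toSubgroup ≤
    Subgroup.map (MulAut.conj ((QuotientGroup.mk' N) g)).toMonoidHom
      (Subgroup.map (QuotientGroup.mk' N) L.toSubgroup)
  rw [← conj_map_map]
  exact Subgroup.map_mono hg

lemma le_of_conj_le {H : Subgroup G} (hNH : N ≤ H) {K : CSub G}
    (h : (CSub.mk H : CSub G) ≤ K) : N ≤ K.toSubgroup := by
  obtain ⟨g, hg⟩ := h
  have h1 : N ≤ K.toSubgroup.map (MulAut.conj g).toMonoidHom := le_trans hNH hg
  have h2 := Subgroup.map_mono (f := (MulAut.conj g⁻¹).toMonoidHom) h1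
  rwa [conj_map_self' N, conj_conj_inv] at h2

lemma csub_rev {K L : CSub G} (hK : N ≤ K.toSubgroup) (hL : N ≤ L.toSubgroup)
    (h : (CSub.mk (K.toSubgroup.map (QuotientGroup.mk' N)) : CSub (G ⧸ N)) ≤
      CSub.mk (L.toSubgroup.map (QuotientGroup.mk' N))) : K ≤ L := by
  obtain ⟨gbar, hg⟩ := h
  obtain ⟨g, rfl⟩ := QuotientGroup.mk'_surjective N gbar
  refine ⟨g, ?_⟩
  have h2 : K.toSubgroup.map (QuotientGroup.mk' N) ≤
      (L.toSubgroup.map (MulAut.conj g).toMonoidHom).map (QuotientGroup.mk' N) := by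
    rw [conj_map_map]; exact hg
  have hNL : N ≤ L.toSubgroup.map (MulAut.conj g).toMonoidHom := by
    have hNN : N.map (MulAut.conj g).toMonoidHom = N := conj_map_self' N g
    rw [← hNN]
    exact Subgroup.map_mono hL
  have h3 := Subgroup.comap_mono (f := QuotientGroup.mk' N) h2
  rwa [Subgroup.comap_map_eq_self (by rw [QuotientGroup.ker_mk']; exact hK),
    Subgroup.comap_map_eq_self (by rw [QuotientGroup.ker_mk']; exact hNL)] at h3

/-- The induced map on conjugacy classes of subgroups. -/
def cmap (N : Subgroup G) [N.Normal] : ConjClassSub G → ConjClassSub (G ⧸ N) :=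
  Quotient.map (fun K : CSub G => CSub.mk (K.toSubgroup.map (QuotientGroup.mk' N)))
    (fun _ _ hab => ⟨csub_mono_s12 hab.1, csub_mono_s12 hab.2⟩)

lemma mk_le_mk {α : Type*} [Preorder α] {a b : α} :
    @toAntisymmetrization α (· ≤ ·) _ a ≤ @toAntisymmetrization α (· ≤ ·) _ b ↔ a ≤ b :=
  Iff.rfl

lemma lamSub_transfer [Finite G] {H : Subgroup G} (hNH : N ≤ H) :
    lamSub H = lamSub (H.map (QuotientGroup.mk' N)) := by
  have key := mob_eq_mob (cmap N) (conjClassOf G H) ?_ ?_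
  · exact key
  · intro c d hc hd
    induction c using Quotient.ind with | _ K =>
    induction d using Quotient.ind with | _ L =>
    have hc' : (CSub.mk H : CSub G) ≤ K := mk_le_mk.mp hc
    have hd' : (CSub.mk H : CSub G) ≤ L := mk_le_mk.mp hd
    exact ⟨fun h' => mk_le_mk.mpr (csub_mono_s12 (mk_le_mk.mp h')),
      fun h' => mk_le_mk.mpr
        (csub_rev (le_of_conj_le hNH hc') (le_of_conj_le hNH hd') (mk_le_mk.mp h'))⟩
  · intro w hw
    induction w using Quotient.ind with | _ W =>
    have hw' : (CSub.mk (H.map (QuotientGroup.mk' N)) : CSub (G ⧸ N)) ≤ W := mk_le_mk.mp hw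
    obtain ⟨gbar, hg⟩ := hw'
    obtain ⟨g, rfl⟩ := QuotientGroup.mk'_surjective N gbar
    refine ⟨@toAntisymmetrization (CSub G) (· ≤ ·) _
      (CSub.mk (W.toSubgroup.comap (QuotientGroup.mk' N))), ?_, ?_⟩
    · refine mk_le_mk.mpr ⟨g, ?_⟩
      refine le_trans (H.le_comap_map (QuotientGroup.mk' N)) ?_
      refine le_trans (Subgroup.comap_mono hg) ?_
      rw [conj_comap_map]
      exact le_rfl
    · exact congrArg (@toAntisymmetrization (CSub (G ⧸ N)) (· ≤ ·) _) (congrArg CSub.mk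
        (Subgroup.map_comap_eq_self_of_surjective (QuotientGroup.mk'_surjective N) _))

end Transfer3

section Index

variable {G : Type*} [Group G] {N : Subgroup G} [N.Normal]

lemma map_inf_of_ker_le_s12 (X C : Subgroup G) (hX : N ≤ X) :
    (X ⊓ C).map (QuotientGroup.mk' N) =
      X.map (QuotientGroup.mk' N) ⊓ C.map (QuotientGroup.mk' N) := by
  refine le_antisymm (le_inf (Subgroup.map_mono inf_le_left)
    (Subgroup.map_mono inf_le_right)) ?_
  intro z hz
  rw [Subgroup.mem_inf] at hz
  obtain ⟨x, hx, hxz⟩ := Subgroup.mem_map.mp hz.1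
  obtain ⟨c, hc, hcz⟩ := Subgroup.mem_map.mp hz.2
  have hxc : x⁻¹ * c ∈ N := by
    have h1 : (QuotientGroup.mk' N) (x⁻¹ * c) = 1 := by
      rw [map_mul, map_inv, hxz, hcz, inv_mul_cancel]
    rwa [← QuotientGroup.ker_mk' N, MonoidHom.mem_ker]
  have hcX : c ∈ X := by
    have h := X.mul_mem hx (hX hxc)
    rwa [mul_inv_cancel_left] at h
  exact Subgroup.mem_map.mpr ⟨c, Subgroup.mem_inf.mpr ⟨hcX, hc⟩, hcz⟩

lemma map_normalizer_of (H : Subgroup G) (hNH : N ≤ H) :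
    (Subgroup.normalizer ((H.map (QuotientGroup.mk' N) : Subgroup (G ⧸ N)) : Set (G ⧸ N))) = (Subgroup.normalizer (H : Set G)).map (QuotientGroup.mk' N) := by
  have h1 := Subgroup.comap_normalizer_eq_of_surjective
    (H.map (QuotientGroup.mk' N)) (QuotientGroup.mk'_surjective N)
  rw [Subgroup.comap_map_eq_self (by rw [QuotientGroup.ker_mk']; exact hNH)] at h1
  rw [← h1, Subgroup.map_comap_eq_self_of_surjective (QuotientGroup.mk'_surjective N)]

lemma map_commutator_eq' :
    (commutator G).map (QuotientGroup.mk' N) = commutator (G ⧸ N) := by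
  rw [commutator_def, Subgroup.map_commutator,
    Subgroup.map_top_of_surjective _ (QuotientGroup.mk'_surjective N), commutator_def]

lemma relIndex_transfer {H : Subgroup G} (hNH : N ≤ H) :
    (commutator G ⊓ H).relIndex (Subgroup.normalizer (H : Set G) ⊓ commutator G) =
      (commutator (G ⧸ N) ⊓ H.map (QuotientGroup.mk' N)).relIndex
        ((Subgroup.normalizer ((H.map (QuotientGroup.mk' N) : Subgroup (G ⧸ N)) : Set (G ⧸ N))) ⊓ commutator (G ⧸ N)) := by
  have hK : (Subgroup.normalizer (H : Set G) ⊓ commutator G).map (QuotientGroup.mk' N) =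
      (Subgroup.normalizer ((H.map (QuotientGroup.mk' N) : Subgroup (G ⧸ N)) : Set (G ⧸ N))) ⊓ commutator (G ⧸ N) := by
    rw [map_inf_of_ker_le_s12 _ _ (hNH.trans H.le_normalizer), map_normalizer_of H hNH,
      map_commutator_eq']
  rw [← hK, ← Subgroup.relIndex_comap]
  have hcomap : (commutator (G ⧸ N) ⊓ H.map (QuotientGroup.mk' N)).comap
      (QuotientGroup.mk' N) = (commutator G ⊔ N) ⊓ H := by
    rw [Subgroup.comap_inf, Subgroup.comap_map_eq_self
      (by rw [QuotientGroup.ker_mk']; exact hNH),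
      ← map_commutator_eq' (N := N), Subgroup.comap_map_eq, QuotientGroup.ker_mk']
  rw [hcomap]
  have hinf : (commutator G ⊓ H) ⊓ (Subgroup.normalizer (H : Set G) ⊓ commutator G) =
      ((commutator G ⊔ N) ⊓ H) ⊓ (Subgroup.normalizer (H : Set G) ⊓ commutator G) := by
    ext x
    simp only [Subgroup.mem_inf]
    exact ⟨fun hh => ⟨⟨Subgroup.mem_sup_left hh.1.1, hh.1.2⟩, hh.2⟩,
      fun hh => ⟨⟨hh.2.2, hh.1.2⟩, hh.2⟩⟩
  rw [← Subgroup.inf_relIndex_right, hinf, Subgroup.inf_relIndex_right]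

end Index

/-- If a quotient `G/N` of a finite group `G` does not satisfy the (μ,λ)-property, then
neither does `G`. -/
theorem not_muLambdaProperty_of_quotient (G : Type*) [Group G] [Finite G]
    (N : Subgroup G) [N.Normal]
    (h : ¬ MuLambdaProperty (G ⧸ N)) :
    ¬ MuLambdaProperty G := by
  intro hG
  apply h
  intro W
  have hNH : N ≤ W.comap (QuotientGroup.mk' N) := by
    have := Subgroup.ker_le_comap (f := QuotientGroup.mk' N) W
    rwa [QuotientGroup.ker_mk'] at this
  have hmap : (W.comap (QuotientGroup.mk' N)).map (QuotientGroup.mk' N) = W :=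
    Subgroup.map_comap_eq_self_of_surjective (QuotientGroup.mk'_surjective N) W
  have key := hG (W.comap (QuotientGroup.mk' N))
  rw [muSub_transfer hNH, lamSub_transfer hNH, relIndex_transfer hNH, hmap] at key
  exact key
end

section
/- Let G_1 and G_2 be finite groups such that no nontrivial quotient of G_1 is isomorphic to a nontrivial quotient of G_2. Then every maximal subgroup M of the direct product G_1 × G_2 splits as a direct product M = M_1 × M_2 with M_1 ≤ G_1 and M_2 ≤ G_2. -/
open scoped MatrixGroups

/-- If no nontrivial quotient of `G₁` is isomorphic to a nontrivial quotient of `G₂`, then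
every maximal subgroup of `G₁ × G₂` splits as a direct product. -/
theorem maximal_subgroup_prod_of_no_common_quotient
    (G₁ G₂ : Type*) [Group G₁] [Group G₂] [Finite G₁] [Finite G₂]
    (h : ∀ (N₁ : Subgroup G₁) (N₂ : Subgroup G₂) [N₁.Normal] [N₂.Normal],
      N₁ ≠ ⊤ → N₂ ≠ ⊤ → IsEmpty ((G₁ ⧸ N₁) ≃* (G₂ ⧸ N₂)))
    (M : Subgroup (G₁ × G₂)) (hM : IsCoatom M) :
    ∃ (M₁ : Subgroup G₁) (M₂ : Subgroup G₂), M = M₁.prod M₂ := by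
  by_cases h1 : M.map (MonoidHom.fst G₁ G₂) = ⊤
  · by_cases h2 : M.map (MonoidHom.snd G₁ G₂) = ⊤
    · -- both projections surjective: use Goursat to get a contradiction
      exfalso
      have hs1 : Function.Surjective (Prod.fst ∘ M.subtype) := by
        intro g
        have : g ∈ M.map (MonoidHom.fst G₁ G₂) := h1 ▸ Subgroup.mem_top g
        obtain ⟨x, hx, rfl⟩ := this
        exact ⟨⟨x, hx⟩, rfl⟩
      have hs2 : Function.Surjective (Prod.snd ∘ M.subtype) := by
        intro g
        have : g ∈ M.map (MonoidHom.snd G₁ G₂) := h2 ▸ Subgroup.mem_top g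
        obtain ⟨x, hx, rfl⟩ := this
        exact ⟨⟨x, hx⟩, rfl⟩
      have hN1 := Subgroup.normal_goursatFst hs1
      have hN2 := Subgroup.normal_goursatSnd hs2
      obtain ⟨e, -⟩ := Subgroup.goursat_surjective hs1 hs2
      have hf1 : M.goursatFst ≠ ⊤ := by
        intro ht
        apply hM.1
        rw [eq_top_iff]
        rintro ⟨a, b⟩ -
        obtain ⟨⟨⟨x, y⟩, hxy⟩, hy⟩ := hs2 b
        simp only [Function.comp_apply, Subgroup.coe_subtype] at hy
        subst hy
        have ha : ((a * x⁻¹, 1) : G₁ × G₂) ∈ M := by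
          rw [← Subgroup.mem_goursatFst, ht]; trivial
        have := mul_mem ha hxy
        simpa using this
      have hf2 : M.goursatSnd ≠ ⊤ := by
        intro ht
        apply hM.1
        rw [eq_top_iff]
        rintro ⟨a, b⟩ -
        obtain ⟨⟨⟨x, y⟩, hxy⟩, hy⟩ := hs1 a
        simp only [Function.comp_apply, Subgroup.coe_subtype] at hy
        subst hy
        have hb : ((1, y⁻¹ * b) : G₁ × G₂) ∈ M := by
          rw [← Subgroup.mem_goursatSnd, ht]; trivial
        have := mul_mem hxy hb
        simpa using this
      exact (h M.goursatFst M.goursatSnd hf1 hf2).false e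
    · -- second projection not top: M = ⊤.prod M₂
      refine ⟨⊤, M.map (MonoidHom.snd G₁ G₂), ?_⟩
      have hle : M ≤ (⊤ : Subgroup G₁).prod (M.map (MonoidHom.snd G₁ G₂)) := by
        rintro ⟨a, b⟩ hab
        exact ⟨trivial, ⟨(a, b), hab, rfl⟩⟩
      rcases lt_or_eq_of_le hle with hlt | heq
      · exfalso
        apply h2
        have := hM.2 _ hlt
        have : ((1 : G₁), ·) ⁻¹' ((⊤ : Subgroup G₁).prod (M.map (MonoidHom.snd G₁ G₂)) : Set (G₁ × G₂)) = (M.map (MonoidHom.snd G₁ G₂) : Set G₂) := by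
          ext x; simp [Subgroup.mem_prod]
        rw [eq_top_iff]
        intro x _
        have hx : ((1 : G₁), x) ∈ (⊤ : Subgroup G₁).prod (M.map (MonoidHom.snd G₁ G₂)) := by
          rw [hM.2 _ hlt]; trivial
        exact hx.2
      · exact heq
  · -- first projection not top: M = M₁.prod ⊤
    refine ⟨M.map (MonoidHom.fst G₁ G₂), ⊤, ?_⟩
    have hle : M ≤ (M.map (MonoidHom.fst G₁ G₂)).prod ⊤ := by
      rintro ⟨a, b⟩ hab
      exact ⟨⟨(a, b), hab, rfl⟩, trivial⟩
    rcases lt_or_eq_of_le hle with hlt | heq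
    · exfalso
      apply h1
      rw [eq_top_iff]
      intro x _
      have hx : (x, (1 : G₂)) ∈ (M.map (MonoidHom.fst G₁ G₂)).prod ⊤ := by
        rw [hM.2 _ hlt]; trivial
      exact hx.1
    · exact heq
end
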